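/- Let X be a ℤ-indexed cochain complex of injective Λ-left-modules each of whose components Xⁱ is finitely generated. Then X admits a 𝒞-precover in K(Λ): there exist a complex A in 𝒞 and a morphism α : A → X in K(Λ) such that every morphism A′ → X in K(Λ) with A′ in 𝒞 factors through α. (Concretely, one may take A to be an injective resolution of Ker(∂⁰_X) together with the canonical chain map A → X.) -/

import Mathlib

open CategoryTheory CategoryTheory.Limits

variable (Λ : Type) [Ring Λ]

/-- A cochain complex of `Λ`-modules lies in the subcategory `𝒞` if it is a complex of
injective modules concentrated in non-negative degrees whose only non-zero cohomology is
`H⁰`, which is finitely generated; i.e. it is an injective resolution of a finitely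
generated `Λ`-module. -/
def MemC (A : CochainComplex (ModuleCat.{0} Λ) ℤ) : Prop :=
  (∀ i : ℤ, Injective (A.X i)) ∧ (∀ i : ℤ, i < 0 → IsZero (A.X i)) ∧
  (∀ i : ℤ, i ≠ 0 → IsZero (A.homology i)) ∧ Module.Finite Λ (A.homology 0)

open CategoryTheory CategoryTheory.Limits

set_option linter.unusedSectionVars false
set_option linter.unusedVariables false

namespace CPrecover

universe v u
variable {C : Type u} [Category.{v} C] [Abelian C]

noncomputable def desc' {S : ShortComplex C} (hS : S.Exact) {J : C} (hJ : Injective J)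
    (f : S.X₂ ⟶ J) (hf : S.f ≫ f = 0) : S.X₃ ⟶ J :=
  @ShortComplex.Exact.descToInjective _ _ _ _ hS _ f hJ hf

lemma g_desc' {S : ShortComplex C} (hS : S.Exact) {J : C} (hJ : Injective J)
    (f : S.X₂ ⟶ J) (hf : S.f ≫ f = 0) : S.g ≫ desc' hS hJ f hf = f :=
  @ShortComplex.Exact.comp_descToInjective _ _ _ _ hS _ f hJ hf

noncomputable def fThru {J Z' Y : C} (hJ : Injective J) (f : Z' ⟶ J) (g : Z' ⟶ Y)
    (hg : Mono g) : Y ⟶ J :=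
  @Injective.factorThru _ _ _ _ _ hJ f g hg

lemma comp_fThru {J Z' Y : C} (hJ : Injective J) (f : Z' ⟶ J) (g : Z' ⟶ Y) (hg : Mono g) :
    g ≫ fThru hJ f g hg = f :=
  @Injective.comp_factorThru _ _ _ _ _ hJ f g hg

noncomputable def mainF (B Y : CochainComplex C ℤ)
    {ZB : C} (ζ : ZB ⟶ B.X 0) (hζ0 : ζ ≫ B.d 0 1 = 0)
    (hζ : (ShortComplex.mk ζ (B.d 0 1) hζ0).Exact)
    (hBex : ∀ n : ℕ, (ShortComplex.mk (B.d (n : ℤ) ((n : ℤ)+1)) (B.d ((n : ℤ)+1) ((n : ℤ)+2))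
      (B.d_comp_d _ _ _)).Exact)
    (hY : ∀ i : ℤ, Injective (Y.X i))
    (hm : Mono ζ) (u : ZB ⟶ Y.X 0) (hu : u ≫ Y.d 0 1 = 0) :
    ∀ n : ℕ, Σ' (a : B.X (n : ℤ) ⟶ Y.X (n : ℤ)) (b : B.X ((n : ℤ)+1) ⟶ Y.X ((n : ℤ)+1)),
      a ≫ Y.d (n : ℤ) ((n : ℤ)+1) = B.d (n : ℤ) ((n : ℤ)+1) ≫ b
  | 0 =>
      ⟨fThru (hY 0) u ζ hm,
       desc' hζ (hY 1) (fThru (hY 0) u ζ hm ≫ Y.d 0 1)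
         (by rw [← Category.assoc, comp_fThru, hu]),
       (g_desc' hζ (hY 1) _ _).symm⟩
  | (n+1) =>
      let p := mainF B Y ζ hζ0 hζ hBex hY hm u hu n
      let q := desc' (hBex n) (hY ((n : ℤ)+2)) (p.2.1 ≫ Y.d ((n : ℤ)+1) ((n : ℤ)+2))
         (by rw [← Category.assoc]
             show (B.d (n : ℤ) ((n : ℤ)+1) ≫ p.2.1) ≫ Y.d ((n : ℤ)+1) ((n : ℤ)+2) = 0
             rw [← p.2.2, Category.assoc, Y.d_comp_d, Limits.comp_zero])
      ⟨p.2.1, by exact q, by exact (g_desc' (hBex n) (hY ((n : ℤ)+2)) _ _).symm⟩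

section

variable (B Y : CochainComplex C ℤ)
    {ZB : C} (ζ : ZB ⟶ B.X 0) (hζ0 : ζ ≫ B.d 0 1 = 0)
    (hζ : (ShortComplex.mk ζ (B.d 0 1) hζ0).Exact)
    (hBex : ∀ n : ℕ, (ShortComplex.mk (B.d (n : ℤ) ((n : ℤ)+1)) (B.d ((n : ℤ)+1) ((n : ℤ)+2))
      (B.d_comp_d _ _ _)).Exact)
    (hY : ∀ i : ℤ, Injective (Y.X i))
    (hB0 : ∀ i : ℤ, i < 0 → IsZero (B.X i))

section Main

variable (hm : Mono ζ) (u : ZB ⟶ Y.X 0) (hu : u ≫ Y.d 0 1 = 0)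

noncomputable def mainMap : B ⟶ Y where
  f i := match i with
    | Int.ofNat n => (mainF B Y ζ hζ0 hζ hBex hY hm u hu n).1
    | Int.negSucc _ => 0
  comm' i j hij := by
    obtain rfl : j = i + 1 := hij.symm
    match i with
    | Int.ofNat n => exact (mainF B Y ζ hζ0 hζ hBex hY hm u hu n).2.2
    | Int.negSucc n => exact (hB0 _ (Int.negSucc_lt_zero n)).eq_of_src _ _

lemma mainMap_f_zero : ζ ≫ (mainMap B Y ζ hζ0 hζ hBex hY hB0 hm u hu).f 0 = u :=
  comp_fThru (hY 0) u ζ hm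

end Main

section Htpy

variable (h : B ⟶ Y) (hh0 : ζ ≫ h.f 0 = 0)

end Htpy

end

noncomputable def htpyG (B Y : CochainComplex C ℤ)
    {ZB : C} (ζ : ZB ⟶ B.X 0) (hζ0 : ζ ≫ B.d 0 1 = 0)
    (hζ : (ShortComplex.mk ζ (B.d 0 1) hζ0).Exact)
    (hBex : ∀ n : ℕ, (ShortComplex.mk (B.d (n : ℤ) ((n : ℤ)+1)) (B.d ((n : ℤ)+1) ((n : ℤ)+2))
      (B.d_comp_d _ _ _)).Exact)
    (hY : ∀ i : ℤ, Injective (Y.X i))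
    (h : B ⟶ Y) (hh0 : ζ ≫ h.f 0 = 0) :
    ∀ n : ℕ, Σ' (a : B.X ((n : ℤ)+1) ⟶ Y.X (n : ℤ)) (b : B.X ((n : ℤ)+2) ⟶ Y.X ((n : ℤ)+1)),
      B.d ((n : ℤ)+1) ((n : ℤ)+2) ≫ b = h.f ((n : ℤ)+1) - a ≫ Y.d (n : ℤ) ((n : ℤ)+1)
  | 0 =>
      let s0 : B.X (1 : ℤ) ⟶ Y.X (0 : ℤ) := desc' hζ (hY 0) (h.f 0) hh0
      let s1 := desc' (hBex 0) (hY 1) (h.f 1 - s0 ≫ Y.d 0 1)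
        (by have c1 : B.d 0 1 ≫ s0 = h.f 0 := g_desc' hζ (hY 0) (h.f 0) hh0
            show B.d (0:ℤ) 1 ≫ (h.f 1 - s0 ≫ Y.d 0 1) = 0
            rw [Preadditive.comp_sub, ← Category.assoc, c1, ← h.comm 0 1, sub_self])
      ⟨by exact s0, by exact s1,
       by exact g_desc' (hBex 0) (hY 1) _ _⟩
  | (n+1) =>
      let p := htpyG B Y ζ hζ0 hζ hBex hY h hh0 n
      let q := desc' (hBex (n+1)) (hY ((n : ℤ)+2))
        (h.f ((n : ℤ)+2) - p.2.1 ≫ Y.d ((n : ℤ)+1) ((n : ℤ)+2))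
        (by show B.d ((n : ℤ)+1) ((n : ℤ)+2) ≫ (h.f ((n : ℤ)+2) - p.2.1 ≫ Y.d ((n : ℤ)+1) ((n : ℤ)+2)) = 0
            rw [Preadditive.comp_sub, ← Category.assoc, p.2.2, ← h.comm ((n : ℤ)+1) ((n : ℤ)+2),
              Preadditive.sub_comp, sub_sub_cancel, Category.assoc, Y.d_comp_d,
              Limits.comp_zero])
      ⟨by exact p.2.1, by exact q,
       by exact g_desc' (hBex (n+1)) (hY ((n : ℤ)+2)) _ _⟩

section HtpyDefs

variable (B Y : CochainComplex C ℤ)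
    {ZB : C} (ζ : ZB ⟶ B.X 0) (hζ0 : ζ ≫ B.d 0 1 = 0)
    (hζ : (ShortComplex.mk ζ (B.d 0 1) hζ0).Exact)
    (hBex : ∀ n : ℕ, (ShortComplex.mk (B.d (n : ℤ) ((n : ℤ)+1)) (B.d ((n : ℤ)+1) ((n : ℤ)+2))
      (B.d_comp_d _ _ _)).Exact)
    (hY : ∀ i : ℤ, Injective (Y.X i))
    (hB0 : ∀ i : ℤ, i < 0 → IsZero (B.X i))
    (h : B ⟶ Y) (hh0 : ζ ≫ h.f 0 = 0)

lemma htpyG_zero : B.d 0 1 ≫ (htpyG B Y ζ hζ0 hζ hBex hY h hh0 0).1 = h.f 0 :=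
  g_desc' hζ (hY 0) (h.f 0) hh0

lemma htpyG_rel (n : ℕ) :
    B.d ((n : ℤ)+1) ((n : ℤ)+2) ≫ (htpyG B Y ζ hζ0 hζ hBex hY h hh0 n).2.1 =
      h.f ((n : ℤ)+1) - (htpyG B Y ζ hζ0 hζ hBex hY h hh0 n).1 ≫ Y.d (n : ℤ) ((n : ℤ)+1) :=
  (htpyG B Y ζ hζ0 hζ hBex hY h hh0 n).2.2

/-- the diagonal maps of the homotopy -/
noncomputable def sfun : ∀ j : ℤ, B.X (j+1) ⟶ Y.X j := fun j =>
  match j with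
  | Int.ofNat n => (htpyG B Y ζ hζ0 hζ hBex hY h hh0 n).1
  | Int.negSucc _ => 0

/-- the maps of the homotopy -/
noncomputable def homfun (i j : ℤ) : B.X i ⟶ Y.X j :=
  if hij : i = j + 1 then eqToHom (congrArg B.X hij) ≫ sfun B Y ζ hζ0 hζ hBex hY h hh0 j else 0

lemma homfun_eq {i j : ℤ} (hij : i = j + 1) :
    homfun B Y ζ hζ0 hζ hBex hY h hh0 i j =
      eqToHom (congrArg B.X hij) ≫ sfun B Y ζ hζ0 hζ hBex hY h hh0 j :=
  dif_pos hij

lemma homfun_succ (j : ℤ) :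
    homfun B Y ζ hζ0 hζ hBex hY h hh0 (j+1) j = sfun B Y ζ hζ0 hζ hBex hY h hh0 j := by
  rw [homfun_eq B Y ζ hζ0 hζ hBex hY h hh0 rfl]
  simp

/-- the homotopy to zero -/
noncomputable def htpy : Homotopy h 0 where
  hom := homfun B Y ζ hζ0 hζ hBex hY h hh0
  zero i j hij := dif_neg (fun e => hij (e.symm))
  comm i := by
    have hrel1 : (ComplexShape.up ℤ).Rel i (i+1) := rfl
    have hrel2 : (ComplexShape.up ℤ).Rel (i-1) i := by simp
    rw [dNext_eq _ hrel1, prevD_eq _ hrel2, homfun_succ]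
    cases i with
    | negSucc m => exact (hB0 _ (Int.negSucc_lt_zero m)).eq_of_src _ _
    | ofNat n =>
      cases n with
      | zero =>
        have e0 : homfun B Y ζ hζ0 hζ hBex hY h hh0 (Int.ofNat 0) ((Int.ofNat 0) - 1) =
            eqToHom (congrArg B.X rfl) ≫ sfun B Y ζ hζ0 hζ hBex hY h hh0 ((Int.ofNat 0) - 1) :=
          homfun_eq B Y ζ hζ0 hζ hBex hY h hh0 (i := Int.ofNat 0) (j := (Int.ofNat 0) - 1) (by decide)
        have e1 : sfun B Y ζ hζ0 hζ hBex hY h hh0 ((Int.ofNat 0) - 1) = 0 := rfl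
        have e2 : B.d (Int.ofNat 0) (Int.ofNat 0 + 1) ≫
            sfun B Y ζ hζ0 hζ hBex hY h hh0 (Int.ofNat 0) = h.f (Int.ofNat 0) :=
          htpyG_zero B Y ζ hζ0 hζ hBex hY h hh0
        rw [e0, e1, e2]
        simp
      | succ m =>
        have e1 : (Int.ofNat (m+1)) - 1 = Int.ofNat m := by
          show ((m+1:ℕ):ℤ) - 1 = ((m:ℕ):ℤ); omega
        rw [e1]
        have e2 : homfun B Y ζ hζ0 hζ hBex hY h hh0 (Int.ofNat (m+1)) (Int.ofNat m) =
            sfun B Y ζ hζ0 hζ hBex hY h hh0 (Int.ofNat m) :=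
          homfun_succ B Y ζ hζ0 hζ hBex hY h hh0 (Int.ofNat m)
        rw [e2]
        show h.f ((m:ℤ)+1) =
          B.d ((m:ℤ)+1) ((m:ℤ)+2) ≫ (htpyG B Y ζ hζ0 hζ hBex hY h hh0 m).2.1
          + (htpyG B Y ζ hζ0 hζ hBex hY h hh0 m).1 ≫ Y.d (m:ℤ) ((m:ℤ)+1)
          + (0 : B ⟶ Y).f ((m:ℤ)+1)
        rw [htpyG_rel B Y ζ hζ0 hζ hBex hY h hh0 m]
        simp
/-- two chain maps agreeing on the kernel are homotopic -/
noncomputable def htpyOfAgree (φ ψ : B ⟶ Y) (hagree : ζ ≫ φ.f 0 = ζ ≫ ψ.f 0) :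
    Homotopy φ ψ :=
  Homotopy.equivSubZero.symm
    (htpy B Y ζ hζ0 hζ hBex hY hB0 (φ - ψ)
      (by rw [HomologicalComplex.sub_f_apply, Preadditive.comp_sub, hagree, sub_self]))

end HtpyDefs

section Extend

open HomologicalComplex

variable [HasZeroObject C] {Z : C} (In : InjectiveResolution Z)

/-- the ℕ↪ℤ embedding -/
abbrev eNZ : ComplexShape.Embedding (ComplexShape.up ℕ) (ComplexShape.up ℤ) :=
  ComplexShape.embeddingUpNat

lemma eNZ_f (n : ℕ) : (eNZ).f n = (n : ℤ) := rfl

/-- the ℤ-indexed extension of the injective resolution -/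
noncomputable def resA : CochainComplex C ℤ := In.cocomplex.extend eNZ

noncomputable def resAIso (n : ℕ) : (resA In).X (n : ℤ) ≅ In.cocomplex.X n :=
  In.cocomplex.extendXIso eNZ (eNZ_f n)

lemma resA_zero : ∀ i : ℤ, i < 0 → IsZero ((resA In).X i) := fun i hi =>
  In.cocomplex.isZero_extend_X eNZ i (fun m hm => by rw [eNZ_f] at hm; omega)

lemma resA_inj : ∀ i : ℤ, Injective ((resA In).X i) := fun i => by
  cases i with
  | ofNat n => exact Injective.of_iso (resAIso In n).symm (In.injective n)
  | negSucc n => exact ((resA_zero In _ (Int.negSucc_lt_zero n))).injective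

lemma resA_d (n m : ℕ) : (resA In).d (n : ℤ) (m : ℤ) =
    (resAIso In n).hom ≫ In.cocomplex.d n m ≫ (resAIso In m).inv :=
  In.cocomplex.extend_d_eq eNZ (eNZ_f n) (eNZ_f m)

/-- comparison of short complexes -/
noncomputable def resASC (n : ℕ) :
    (ShortComplex.mk (In.cocomplex.d n (n+1)) (In.cocomplex.d (n+1) (n+2))
        (In.cocomplex.d_comp_d _ _ _)) ≅
      (ShortComplex.mk ((resA In).d (n : ℤ) ((n : ℤ)+1)) ((resA In).d ((n : ℤ)+1) ((n : ℤ)+2))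
        ((resA In).d_comp_d _ _ _)) := by
  refine ShortComplex.isoMk (resAIso In n).symm
    (by exact (resAIso In (n+1)).symm) (by exact (resAIso In (n+2)).symm) ?_ ?_
  · show (resAIso In n).inv ≫ (resA In).d (n : ℤ) ((n : ℤ)+1) = _
    have : (resA In).d (n : ℤ) ((n : ℤ)+1) = (resAIso In n).hom ≫ In.cocomplex.d n (n+1) ≫
        (resAIso In (n+1)).inv := resA_d In n (n+1)
    conv_lhs => rw [this]
    simp
  · show (resAIso In (n+1)).inv ≫ (resA In).d ((n : ℤ)+1) ((n : ℤ)+2) = _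
    have : (resA In).d ((n : ℤ)+1) ((n : ℤ)+2) = (resAIso In (n+1)).hom ≫
        In.cocomplex.d (n+1) (n+2) ≫ (resAIso In (n+2)).inv := resA_d In (n+1) (n+2)
    conv_lhs => rw [this]
    simp

lemma resA_ex (n : ℕ) :
    (ShortComplex.mk ((resA In).d (n : ℤ) ((n : ℤ)+1)) ((resA In).d ((n : ℤ)+1) ((n : ℤ)+2))
      ((resA In).d_comp_d _ _ _)).Exact :=
  ShortComplex.exact_of_iso (resASC In n) (In.exact_succ n)

/-- the inclusion of `Z` into degree 0 of the extended resolution. -/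
noncomputable def resAζ : Z ⟶ (resA In).X (0 : ℤ) :=
  In.ι.f 0 ≫ (resAIso In 0).inv

lemma resAζ_comp_d : resAζ In ≫ (resA In).d 0 1 = 0 := by
  rw [resAζ]
  have : (resA In).d (0 : ℤ) (1 : ℤ) = (resAIso In 0).hom ≫ In.cocomplex.d 0 1 ≫
      (resAIso In 1).inv := resA_d In 0 1
  rw [this]
  exact (Category.assoc (In.ι.f 0) _ _).trans ((congrArg _ (Iso.inv_hom_id_assoc _ _)).trans
    ((In.ι_f_zero_comp_complex_d_assoc _).trans zero_comp))

instance : Mono (resAζ In) := by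
  have : Mono (In.ι.f 0) := inferInstance
  rw [resAζ]
  exact @mono_comp _ _ _ _ _ _ this _ inferInstance

noncomputable def resAKernelIsLimit :
    IsLimit (KernelFork.ofι (resAζ In) (resAζ_comp_d In)) := by
  exact extend.leftHomologyData.isLimitKernelFork In.cocomplex eNZ (eNZ_f 0)
    ((ComplexShape.up ℕ).next_eq' rfl) ((ComplexShape.up ℤ).next_eq' rfl)
    In.kernelFork In.isLimitKernelFork

lemma resAζ_exact : (ShortComplex.mk (resAζ In) ((resA In).d 0 1) (resAζ_comp_d In)).Exact :=
  ShortComplex.exact_of_f_is_kernel _ (resAKernelIsLimit In)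

/-- `H⁰` of the extended resolution is `Z`. -/
noncomputable def resAHomologyIso : (resA In).homology (0 : ℤ) ≅ Z :=
  ((resA In).isoHomologyπ (-1) 0 ((ComplexShape.up ℤ).prev_eq' (by simp))
    ((resA_zero In (-1) (by norm_num)).eq_of_src _ _)).symm ≪≫
  IsLimit.conePointUniqueUpToIso
    ((resA In).cyclesIsKernel 0 1 ((ComplexShape.up ℤ).next_eq' rfl))
    (resAKernelIsLimit In)

lemma resA_exactAt (i : ℤ) (hi : i ≠ 0) : (resA In).ExactAt i := by
  rcases lt_or_gt_of_ne hi with hneg | hpos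
  · exact ShortComplex.exact_of_isZero_X₂ _ (resA_zero In i hneg)
  · obtain ⟨n, rfl⟩ : ∃ n : ℕ, i = (n : ℤ) + 1 := ⟨(i-1).toNat, by omega⟩
    rw [(resA In).exactAt_iff' (n : ℤ) ((n : ℤ)+1) ((n : ℤ)+2)
      ((ComplexShape.up ℤ).prev_eq' (by rw [ComplexShape.up_Rel]))
      ((ComplexShape.up ℤ).next_eq' (by rw [ComplexShape.up_Rel]; omega))]
    exact resA_ex In n

end Extend

end CPrecover

/-- Every complex `X` of finitely generated injective `Λ`-modules admits a `𝒞`-precover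
in the homotopy category `K(Λ)`: there are `A` in `𝒞` and `α : A ⟶ X` in `K(Λ)` such
that every morphism `A' ⟶ X` in `K(Λ)` with `A'` in `𝒞` factors through `α`. -/
theorem exists_C_precover (k : Type) [Field k] [Algebra k Λ] [FiniteDimensional k Λ]
    (X : CochainComplex (ModuleCat.{0} Λ) ℤ)
    (hinj : ∀ i : ℤ, Injective (X.X i))
    (hfg : ∀ i : ℤ, Module.Finite Λ (X.X i)) :
    ∃ A : CochainComplex (ModuleCat.{0} Λ) ℤ, MemC Λ A ∧
      ∃ α : (HomotopyCategory.quotient (ModuleCat.{0} Λ) (ComplexShape.up ℤ)).obj A ⟶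
            (HomotopyCategory.quotient (ModuleCat.{0} Λ) (ComplexShape.up ℤ)).obj X,
        ∀ A' : CochainComplex (ModuleCat.{0} Λ) ℤ, MemC Λ A' →
          ∀ f : (HomotopyCategory.quotient (ModuleCat.{0} Λ) (ComplexShape.up ℤ)).obj A' ⟶
                (HomotopyCategory.quotient (ModuleCat.{0} Λ) (ComplexShape.up ℤ)).obj X,
            ∃ g, g ≫ α = f := by
  classical
  set Q := HomotopyCategory.quotient (ModuleCat.{0} Λ) (ComplexShape.up ℤ) with hQ
  let Z : ModuleCat.{0} Λ := kernel (X.d 0 1)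
  let In : InjectiveResolution Z := InjectiveResolution.of Z
  let A : CochainComplex (ModuleCat.{0} Λ) ℤ := CPrecover.resA In
  have hζ0 := CPrecover.resAζ_comp_d In
  have hζex := CPrecover.resAζ_exact In
  have hAex := CPrecover.resA_ex In
  have hA0 := CPrecover.resA_zero In
  have hAinj := CPrecover.resA_inj In
  -- the chain-level precover map
  let α₀ : A ⟶ X := CPrecover.mainMap A X (CPrecover.resAζ In) hζ0 hζex hAex hinj hA0
    inferInstance (kernel.ι (X.d 0 1)) (kernel.condition _)
  have hα : CPrecover.resAζ In ≫ α₀.f 0 = kernel.ι (X.d 0 1) :=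
    CPrecover.mainMap_f_zero A X (CPrecover.resAζ In) hζ0 hζex hAex hinj hA0
      inferInstance (kernel.ι (X.d 0 1)) (kernel.condition _)
  haveI : IsNoetherianRing Λ := isNoetherian_of_tower k inferInstance
  haveI : Module.Finite Λ (X.X 0) := hfg 0
  haveI : IsNoetherian Λ (X.X 0) := inferInstance
  have hker : Module.Finite Λ (LinearMap.ker (X.d 0 1).hom) :=
    inferInstance
  have hmem : MemC Λ A := by
    refine ⟨hAinj, hA0, ?_, ?_⟩
    · intro i hi
      exact (A.exactAt_iff_isZero_homology i).mp (CPrecover.resA_exactAt In i hi)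
    · let eiso : ModuleCat.of Λ (LinearMap.ker (X.d 0 1).hom) ≅ A.homology 0 :=
        (ModuleCat.kernelIsoKer (X.d 0 1)).symm ≪≫ (CPrecover.resAHomologyIso In).symm
      haveI : Module.Finite Λ (ModuleCat.of Λ ↥(LinearMap.ker (X.d 0 1).hom)) := hker
      exact Module.Finite.equiv eiso.toLinearEquiv
  refine ⟨A, hmem, Q.map α₀, ?_⟩
  intro A' hA' f'
  obtain ⟨f, hf⟩ := Q.map_surjective f'
  have hA'inj := hA'.1
  have hA'0 := hA'.2.1
  have hA'ex : ∀ n : ℕ, (ShortComplex.mk (A'.d (n : ℤ) ((n : ℤ)+1)) (A'.d ((n : ℤ)+1) ((n : ℤ)+2))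
      (A'.d_comp_d _ _ _)).Exact := by
    intro n
    have h1 : IsZero (A'.homology ((n : ℤ)+1)) := hA'.2.2.1 ((n : ℤ)+1) (by omega)
    have h2 := (A'.exactAt_iff_isZero_homology ((n : ℤ)+1)).mpr h1
    rw [A'.exactAt_iff' (n : ℤ) ((n : ℤ)+1) ((n : ℤ)+2)
      ((ComplexShape.up ℤ).prev_eq' (by rw [ComplexShape.up_Rel]))
      ((ComplexShape.up ℤ).next_eq' (by rw [ComplexShape.up_Rel]; omega))] at h2
    exact h2
  have hζ'0 : kernel.ι (A'.d 0 1) ≫ A'.d 0 1 = 0 := kernel.condition _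
  have hζ'ex : (ShortComplex.mk (kernel.ι (A'.d 0 1)) (A'.d 0 1) hζ'0).Exact :=
    ShortComplex.exact_of_f_is_kernel _ (kernelIsKernel _)
  have hw0 : (kernel.ι (A'.d 0 1) ≫ f.f 0) ≫ X.d 0 1 = 0 := by
    rw [Category.assoc, f.comm 0 1, ← Category.assoc, kernel.condition, zero_comp]
  let w : kernel (A'.d 0 1) ⟶ Z := kernel.lift (X.d 0 1) (kernel.ι (A'.d 0 1) ≫ f.f 0) hw0
  let ug : kernel (A'.d 0 1) ⟶ A.X 0 := w ≫ CPrecover.resAζ In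
  have hug : ug ≫ A.d 0 1 = 0 := by
    show (w ≫ CPrecover.resAζ In) ≫ A.d 0 1 = 0
    rw [Category.assoc, hζ0, comp_zero]
  let g : A' ⟶ A := CPrecover.mainMap A' A (kernel.ι (A'.d 0 1)) hζ'0 hζ'ex hA'ex hAinj hA'0
    inferInstance ug hug
  have hg0 : kernel.ι (A'.d 0 1) ≫ g.f 0 = ug :=
    CPrecover.mainMap_f_zero A' A (kernel.ι (A'.d 0 1)) hζ'0 hζ'ex hA'ex hAinj hA'0
      inferInstance ug hug
  have hagree : kernel.ι (A'.d 0 1) ≫ (g ≫ α₀).f 0 = kernel.ι (A'.d 0 1) ≫ f.f 0 := by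
    rw [HomologicalComplex.comp_f, ← Category.assoc, hg0]
    show (w ≫ CPrecover.resAζ In) ≫ α₀.f 0 = _
    rw [Category.assoc, hα, kernel.lift_ι]
  let H : Homotopy (g ≫ α₀) f :=
    CPrecover.htpyOfAgree A' X (kernel.ι (A'.d 0 1)) hζ'0 hζ'ex hA'ex hinj hA'0 (g ≫ α₀) f hagree
  refine ⟨Q.map g, ?_⟩
  rw [← Q.map_comp, HomotopyCategory.eq_of_homotopy _ _ H, hf]
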